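/- There exist uncountably many sequences (a_k) of positive integers, each taking values in {1,2,4}, that are not eventually periodic and such that for the associated convergents s_k/t_k all t_k are odd and the Jacobi symbol (s_k/t_k) = 1 for all k ≥ 0. -/
import Mathlib


/-- Numerators of continued fraction convergents: `cfS a k = s_k`
(with `s_{-1} = 1`, `s_0 = a_0`, `s_k = a_k s_{k-1} + s_{k-2}`). -/
def cfS (a : ℕ → ℤ) : ℕ → ℤ
  | 0 => a 0
  | 1 => a 1 * a 0 + 1
  | (k+2) => a (k+2) * cfS a (k+1) + cfS a k

/-- Denominators of continued fraction convergents: `cfT a k = t_k`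
(with `t_{-1} = 0`, `t_0 = 1`, `t_k = a_k t_{k-1} + t_{k-2}`). -/
def cfT (a : ℕ → ℤ) : ℕ → ℤ
  | 0 => 1
  | 1 => a 1
  | (k+2) => a (k+2) * cfT a (k+1) + cfT a k

namespace CFJacobiAux

/-- The parametrized family of sequences. -/
def fb (b : ℕ → Bool) : ℕ → ℤ := fun k =>
  if k < 2 then 1 else if k % 2 = 0 then 4 else if b ((k - 3) / 2) then 4 else 2

lemma fb_odd_val (b : ℕ → Bool) (i : ℕ) : fb b (2 * i + 3) = if b i then 4 else 2 := by
  unfold fb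
  rw [if_neg (by omega), if_neg (by omega), show (2 * i + 3 - 3) / 2 = i by omega]

lemma fb_inj : Function.Injective fb := by
  intro b c h
  funext i
  have h' := congrFun h (2 * i + 3)
  rw [fb_odd_val, fb_odd_val] at h'
  cases hb : b i <;> cases hc : c i <;> rw [hb, hc] at h' <;> simp_all

lemma fb0 (b : ℕ → Bool) : fb b 0 = 1 := rfl
lemma fb1 (b : ℕ → Bool) : fb b 1 = 1 := rfl

lemma fb_even (b : ℕ → Bool) (k : ℕ) : fb b (2 * k + 2) = 4 := by
  simp only [fb]
  rw [if_neg (by omega), if_pos (by omega)]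

lemma fb_odd (b : ℕ → Bool) (k : ℕ) : fb b (2 * k + 3) = 2 ∨ fb b (2 * k + 3) = 4 := by
  simp only [fb]
  rw [if_neg (by omega), if_neg (by omega)]
  cases b ((2 * k + 3 - 3) / 2) <;> simp

/-- Main arithmetic lemma. -/
theorem main (a : ℕ → ℤ) (h0 : a 0 = 1) (h1 : a 1 = 1)
    (h2 : ∀ k, a (2 * k + 2) = 4) (h3 : ∀ k, a (2 * k + 3) = 2 ∨ a (2 * k + 3) = 4) :
    ∀ k, Odd (cfT a k) ∧ jacobiSym (cfS a k) (cfT a k).natAbs = 1 := by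
  -- every a (k+2) is 2 or 4
  have haev : ∀ k, a (k + 2) = 2 ∨ a (k + 2) = 4 := by
    intro k
    rcases Nat.even_or_odd k with ⟨m, hm⟩ | ⟨m, hm⟩
    · right; subst hm; rw [show m + m + 2 = 2 * m + 2 by ring]; exact h2 m
    · subst hm; have := h3 m; rw [show 2 * m + 1 + 2 = 2 * m + 3 by ring]; exact this
  -- t facts by two-step induction
  have T : ∀ k, 0 < cfT a k ∧ Odd (cfT a k) ∧ (Even k → cfT a k % 4 = 1) := by
    intro k
    induction k using Nat.strong_induction_on with
    | _ k ih =>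
      match k with
      | 0 => refine ⟨by norm_num [cfT], by norm_num [cfT], fun _ => by norm_num [cfT]⟩
      | 1 =>
        refine ⟨by rw [cfT, h1]; norm_num, by rw [cfT, h1]; exact odd_one, fun h => by
          exact absurd h (by simp [Nat.even_iff])⟩
      | (k+2) =>
        obtain ⟨p1, o1, m1⟩ := ih (k+1) (by omega)
        obtain ⟨p0, o0, m0⟩ := ih k (by omega)
        have ha2 := haev k
        have hc : cfT a (k+2) = a (k+2) * cfT a (k+1) + cfT a k := rfl
        constructor
        · rcases ha2 with h | h <;> rw [hc, h] <;> nlinarith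
        constructor
        · have he : Even (a (k+2) * cfT a (k+1)) := by
            rcases ha2 with h | h <;> rw [h]
            · exact ⟨cfT a (k+1), by ring⟩
            · exact ⟨2 * cfT a (k+1), by ring⟩
          rw [hc]; exact he.add_odd o0
        · intro hek
          have hk : Even k := by
            rcases hek with ⟨m, hm⟩
            exact ⟨m - 1, by omega⟩
          obtain ⟨m, hm⟩ := hk
          have h4 : a (k+2) = 4 := by
            have := h2 m; rw [show 2 * m + 2 = m + m + 2 by ring] at this
            rw [show k + 2 = m + m + 2 by omega]; exact this
          have := m0 ⟨m, hm⟩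
          rw [hc, h4]
          omega
  have tpos : ∀ k, 0 < cfT a k := fun k => (T k).1
  have todd : ∀ k, Odd (cfT a k) := fun k => (T k).2.1
  have tmod : ∀ k, Even k → cfT a k % 4 = 1 := fun k => (T k).2.2
  have tcast : ∀ k, ((cfT a k).natAbs : ℤ) = cfT a k := fun k =>
    Int.natAbs_of_nonneg (le_of_lt (tpos k))
  have toddn : ∀ k, Odd (cfT a k).natAbs := fun k => Int.natAbs_odd.mpr (todd k)
  have tmodn : ∀ k, Even k → (cfT a k).natAbs % 4 = 1 := by
    intro k hk
    have h1' := tmod k hk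
    have h2' := tcast k
    omega
  -- determinant identity
  have D : ∀ k, cfS a (k+1) * cfT a k - cfS a k * cfT a (k+1) = (-1 : ℤ) ^ k := by
    intro k
    induction k with
    | zero => show (a 1 * a 0 + 1) * 1 - a 0 * a 1 = 1; ring
    | succ k ih =>
      show (a (k+2) * cfS a (k+1) + cfS a k) * cfT a (k+1)
          - cfS a (k+1) * (a (k+2) * cfT a (k+1) + cfT a k) = (-1 : ℤ) ^ (k+1)
      rw [pow_succ]
      linear_combination (-1 : ℤ) * ih
  -- u_k = J(t_k | t_{k+1}) = 1
  have U : ∀ k, jacobiSym (cfT a k) ((cfT a (k+1)).natAbs) = 1 := by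
    intro k
    induction k using Nat.strong_induction_on with
    | _ k ih =>
      match k with
      | 0 =>
        have : cfT a 1 = 1 := by rw [cfT, h1]
        rw [this]
        norm_num [jacobiSym.one_right]
      | (k+1) =>
        have ihk := ih k (by omega)
        set m := (cfT a (k+1)).natAbs with hm
        set n := (cfT a (k+2)).natAbs with hn
        have hmc : (m : ℤ) = cfT a (k+1) := tcast (k+1)
        have hnc : (n : ℤ) = cfT a (k+2) := tcast (k+2)
        -- reciprocity: J(m | n) = J(n | m)
        have hrec : jacobiSym (m : ℤ) n = jacobiSym (n : ℤ) m := by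
          rcases Nat.even_or_odd (k+1) with he | ho
          · exact jacobiSym.quadratic_reciprocity_one_mod_four (tmodn (k+1) he) (toddn (k+2))
          · have he2 : Even (k+2) := by
              rcases ho with ⟨j, hj⟩; exact ⟨j+1, by omega⟩
            exact jacobiSym.quadratic_reciprocity_one_mod_four' (toddn (k+1)) (tmodn (k+2) he2)
        have hmodeq : (cfT a (k+2)) % (m : ℤ) = (cfT a k) % (m : ℤ) := by
          rw [hmc]
          show (a (k+2) * cfT a (k+1) + cfT a k) % cfT a (k+1) = cfT a k % cfT a (k+1)
          rw [show a (k+2) * cfT a (k+1) + cfT a k = cfT a k + cfT a (k+1) * a (k+2) by ring,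
            Int.add_mul_emod_self_left]
        calc jacobiSym (cfT a (k+1)) n = jacobiSym (m : ℤ) n := by rw [hmc]
          _ = jacobiSym (n : ℤ) m := hrec
          _ = jacobiSym (cfT a (k+2)) m := by rw [hnc]
          _ = jacobiSym (cfT a k) m := jacobiSym.mod_left' hmodeq
          _ = 1 := ihk
  -- main conclusion
  intro k
  refine ⟨todd k, ?_⟩
  match k with
  | 0 =>
    have : cfT a 0 = 1 := rfl
    rw [this]
    norm_num [jacobiSym.one_right]
  | (k+1) =>
    set n := (cfT a (k+1)).natAbs with hn
    have hnc : (n : ℤ) = cfT a (k+1) := tcast (k+1)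
    have hD := D k
    have hmodeq : (cfS a (k+1) * cfT a k) % (n : ℤ) = ((-1 : ℤ) ^ k) % (n : ℤ) := by
      rw [hnc]
      rw [show cfS a (k+1) * cfT a k = (-1 : ℤ)^k + cfT a (k+1) * cfS a k by linarith,
        Int.add_mul_emod_self_left]
    have hmul : jacobiSym (cfS a (k+1)) n * jacobiSym (cfT a k) n
        = jacobiSym ((-1 : ℤ) ^ k) n := by
      rw [← jacobiSym.mul_left]
      exact jacobiSym.mod_left' hmodeq
    have hU : jacobiSym (cfT a k) n = 1 := U k
    have hRHS : jacobiSym ((-1 : ℤ) ^ k) n = 1 := by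
      rcases Nat.even_or_odd k with he | ho
      · rw [he.neg_one_pow]; exact jacobiSym.one_left n
      · rw [ho.neg_one_pow, jacobiSym.at_neg_one (toddn (k+1))]
        have he2 : Even (k+1) := by rcases ho with ⟨j, hj⟩; exact ⟨j+1, by omega⟩
        exact ZMod.χ₄_nat_one_mod_four (tmodn (k+1) he2)
    rw [hU, mul_one] at hmul
    rw [hmul, hRHS]

/-- Eventually periodic sequences. -/
def EP : Set (ℕ → ℤ) := {a | ∃ N p : ℕ, 1 ≤ p ∧ ∀ k, N ≤ k → a (k + p) = a k}

lemma ep_ext {a b : ℕ → ℤ} {N q : ℕ} (hq : 0 < q)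
    (ha : ∀ k, N ≤ k → a (k + q) = a k) (hb : ∀ k, N ≤ k → b (k + q) = b k)
    (h : ∀ i, i < N + q → a i = b i) : a = b := by
  funext k
  induction k using Nat.strong_induction_on with
  | _ k ih =>
    by_cases hk : k < N + q
    · exact h k hk
    · have hk1 : N ≤ k - q := by omega
      have hk2 : k - q + q = k := by omega
      calc a k = a (k - q + q) := by rw [hk2]
        _ = a (k - q) := ha _ hk1
        _ = b (k - q) := ih _ (by omega)
        _ = b (k - q + q) := (hb _ hk1).symm
        _ = b k := by rw [hk2]

lemma ep_countable : EP.Countable := by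
  have hsub : EP ⊆ ⋃ N : ℕ, ⋃ p : ℕ,
      {a : ℕ → ℤ | ∀ k, N ≤ k → a (k + (p + 1)) = a k} := by
    rintro a ⟨N, p, hp, h⟩
    refine Set.mem_iUnion.mpr ⟨N, Set.mem_iUnion.mpr ⟨p - 1, ?_⟩⟩
    have : p - 1 + 1 = p := by omega
    rw [Set.mem_setOf_eq, this]
    exact h
  refine Set.Countable.mono hsub ?_
  refine Set.countable_iUnion fun N => Set.countable_iUnion fun p => ?_
  rw [← Set.countable_coe_iff]
  have : Function.Injective
      (fun a : {a : ℕ → ℤ | ∀ k, N ≤ k → a (k + (p + 1)) = a k} =>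
        (fun i : Fin (N + (p + 1)) => a.1 i)) := by
    rintro ⟨x, hx⟩ ⟨y, hy⟩ hxy
    have h' : ∀ i, i < N + (p + 1) → x i = y i := by
      intro i hi
      exact congrFun hxy ⟨i, hi⟩
    exact Subtype.ext (ep_ext (by omega) hx hy h')
  exact this.countable

lemma uncountable_bool : ¬ (Set.range fb).Countable := by
  intro hc
  rw [← Set.countable_coe_iff] at hc
  have : Countable (ℕ → Bool) :=
    (Equiv.ofInjective fb fb_inj).countable_iff.mpr hc
  obtain ⟨f, hf⟩ := exists_surjective_nat (ℕ → Bool)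
  obtain ⟨n, hn⟩ := hf (fun n => ! f n n)
  have := congrFun hn n
  cases h : f n n <;> rw [h] at this <;> simp at this

end CFJacobiAux

theorem uncountably_many_nonperiodic_with_constant_jacobi_sequence :
    ∃ S : Set (ℕ → ℤ), ¬ S.Countable ∧
      ∀ a ∈ S, (∀ k, a k = 1 ∨ a k = 2 ∨ a k = 4) ∧
        ¬(∃ N p : ℕ, 1 ≤ p ∧ ∀ k, N ≤ k → a (k + p) = a k) ∧
        ∀ k, Odd (cfT a k) ∧ jacobiSym (cfS a k) (cfT a k).natAbs = 1 := by
  classical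
  refine ⟨Set.range CFJacobiAux.fb \ CFJacobiAux.EP, ?_, ?_⟩
  · intro hc
    have : (Set.range CFJacobiAux.fb).Countable := by
      have : Set.range CFJacobiAux.fb ⊆
          (Set.range CFJacobiAux.fb \ CFJacobiAux.EP) ∪ CFJacobiAux.EP := by
        intro x hx
        by_cases h : x ∈ CFJacobiAux.EP
        · exact Or.inr h
        · exact Or.inl ⟨hx, h⟩
      exact Set.Countable.mono this (hc.union CFJacobiAux.ep_countable)
    exact CFJacobiAux.uncountable_bool this
  · rintro a ⟨⟨b, rfl⟩, hnep⟩
    refine ⟨?_, hnep, ?_⟩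
    · intro k
      simp only [CFJacobiAux.fb]
      split
      · left; rfl
      · split
        · right; right; rfl
        · split
          · right; right; rfl
          · right; left; rfl
    · exact CFJacobiAux.main _ (CFJacobiAux.fb0 b) (CFJacobiAux.fb1 b)
        (CFJacobiAux.fb_even b) (CFJacobiAux.fb_odd b)
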